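/- Let (a_1,b_1), ..., (a_n,b_n) be pairs of nonnegative rationals with a_i + b_i ∈ [c', c] for each i, and let α ∈ [0,1] satisfy ∑ a_i = α · ∑ b_i. Then there exists a permutation p of [n] such that for all 1 ≤ j ≤ j' ≤ n, |∑_{i=j}^{j'} (a_{p(i)} − α · b_{p(i)})| ≤ 2c. -/

import Mathlib

open Finset List

lemma list_sum_nonpos : ∀ l : List ℚ, (∀ x ∈ l, x ≤ 0) → l.sum ≤ 0 := by
  intro l
  induction l with
  | nil => simp
  | cons y t ih =>
    intro h
    have h1 := h y (List.mem_cons_self)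
    have h2 := ih (fun x hx => h x (List.mem_cons_of_mem y hx))
    simp only [List.sum_cons]
    linarith

/-- Greedy lemma: any list of values bounded by `c` with sum cancelling `S` can be
reordered so that all prefix sums (starting at `S`) stay within `[-c, c]`. -/
lemma aux_list (c : ℚ) : ∀ (m : ℕ) (l : List ℚ), l.length = m →
    (∀ x ∈ l, |x| ≤ c) → ∀ S : ℚ, |S| ≤ c → S + l.sum = 0 →
    ∃ l' : List ℚ, l'.Perm l ∧ ∀ k, |S + (l'.take k).sum| ≤ c := by
  intro m
  induction m with
  | zero =>
    intro l hl _ S hS _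
    have : l = [] := List.length_eq_zero_iff.mp hl
    subst this
    exact ⟨[], List.Perm.refl _, fun k => by simpa using hS⟩
  | succ m ih =>
    intro l hl hxb S hS hsum
    have hSc := (abs_le.mp hS)
    rcases le_or_gt S 0 with hS0 | hS0
    · -- find a nonnegative element
      have hex : ∃ x ∈ l, 0 ≤ x := by
        by_contra h
        push_neg at h
        obtain ⟨y, t, rfl⟩ : ∃ y t, l = y :: t := by
          cases l with
          | nil => simp at hl
          | cons y t => exact ⟨y, t, rfl⟩
        have h1 : t.sum ≤ 0 := list_sum_nonpos t (fun x hx => (h x (List.mem_cons_of_mem y hx)).le)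
        have h2 : y < 0 := h y (List.mem_cons_self)
        have : (y :: t).sum < 0 := by simp only [List.sum_cons]; linarith
        linarith
      obtain ⟨x, hxl, hx0⟩ := hex
      have hxc : x ≤ c := le_trans (le_abs_self x) (hxb x hxl)
      have hperm0 : l ~ x :: l.erase x := List.perm_cons_erase hxl
      have hsum0 : x + (l.erase x).sum = l.sum := by
        have := hperm0.sum_eq; simpa using this.symm
      have hlen' : (l.erase x).length = m := by
        have := hperm0.length_eq; simp at this; omega
      have hb' : ∀ y ∈ l.erase x, |y| ≤ c := fun y hy => hxb y (List.mem_of_mem_erase hy)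
      have hS' : |S + x| ≤ c := abs_le.mpr ⟨by linarith, by linarith⟩
      have hsum' : (S + x) + (l.erase x).sum = 0 := by linarith
      obtain ⟨l'', hperm, hpre⟩ := ih (l.erase x) hlen' hb' (S + x) hS' hsum'
      refine ⟨x :: l'', (hperm.cons x).trans hperm0.symm, fun k => ?_⟩
      cases k with
      | zero => simpa using hS
      | succ k =>
        have := hpre k
        simp only [List.take_succ_cons, List.sum_cons]
        convert this using 2
        ring
    · -- find a nonpositive element
      have hex : ∃ x ∈ l, x ≤ 0 := by
        by_contra h
        push_neg at h
        have h1 : 0 ≤ l.sum := List.sum_nonneg (fun x hx => (h x hx).le)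
        linarith
      obtain ⟨x, hxl, hx0⟩ := hex
      have hxc : -c ≤ x := by
        have := (abs_le.mp (hxb x hxl)).1; linarith
      have hperm0 : l ~ x :: l.erase x := List.perm_cons_erase hxl
      have hsum0 : x + (l.erase x).sum = l.sum := by
        have := hperm0.sum_eq; simpa using this.symm
      have hlen' : (l.erase x).length = m := by
        have := hperm0.length_eq; simp at this; omega
      have hb' : ∀ y ∈ l.erase x, |y| ≤ c := fun y hy => hxb y (List.mem_of_mem_erase hy)
      have hS' : |S + x| ≤ c := abs_le.mpr ⟨by linarith, by linarith⟩
      have hsum' : (S + x) + (l.erase x).sum = 0 := by linarith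
      obtain ⟨l'', hperm, hpre⟩ := ih (l.erase x) hlen' hb' (S + x) hS' hsum'
      refine ⟨x :: l'', (hperm.cons x).trans hperm0.symm, fun k => ?_⟩
      cases k with
      | zero => simpa using hS
      | succ k =>
        have := hpre k
        simp only [List.take_succ_cons, List.sum_cons]
        convert this using 2
        ring

/-- If two tuples give permutation-equivalent lists, one is a permutation of the other. -/
lemma exists_perm_of_ofFn_perm {α : Type*} : ∀ (n : ℕ) (f g : Fin n → α),
    (List.ofFn f).Perm (List.ofFn g) → ∃ σ : Equiv.Perm (Fin n), f = g ∘ σ := by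
  intro n
  induction n with
  | zero => exact fun f g _ => ⟨1, funext fun i => i.elim0⟩
  | succ n ih =>
    intro f g hp
    have hf0 : f 0 ∈ List.ofFn g := hp.mem_iff.mp (by
      rw [List.mem_ofFn]; exact ⟨0, rfl⟩)
    rw [List.mem_ofFn] at hf0
    obtain ⟨k, hk⟩ := hf0
    set g' : Fin (n + 1) → α := g ∘ (Equiv.swap 0 k) with hg'
    have hg'0 : g' 0 = f 0 := by simp [hg', hk]
    have hpg' : (List.ofFn g').Perm (List.ofFn g) :=
      Equiv.Perm.ofFn_comp_perm (Equiv.swap 0 k) g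
    have hp' : (List.ofFn f).Perm (List.ofFn g') := hp.trans hpg'.symm
    rw [List.ofFn_succ, List.ofFn_succ, hg'0] at hp'
    have htail : (List.ofFn (f ∘ Fin.succ)).Perm (List.ofFn (g' ∘ Fin.succ)) := by
      have := hp'.cons_inv
      exact this
    obtain ⟨τ, hτ⟩ := ih (f ∘ Fin.succ) (g' ∘ Fin.succ) htail
    refine ⟨Equiv.Perm.decomposeFin.symm (k, τ), funext fun i => ?_⟩
    refine Fin.cases ?_ (fun i => ?_) i
    · simp [hk]
    · have := congrFun hτ i
      simp only [Function.comp_apply, Equiv.Perm.decomposeFin_symm_apply_succ]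
      simpa [hg', Function.comp] using this

theorem stmt_2 (n : ℕ) (c c' : ℚ) (hc' : 0 < c') (hcc : c' ≤ c)
    (a b : Fin n → ℚ) (ha : ∀ i, 0 ≤ a i) (hb : ∀ i, 0 ≤ b i)
    (hab : ∀ i, a i + b i ∈ Set.Icc c' c)
    (α : ℚ) (hα0 : 0 ≤ α) (hα1 : α ≤ 1)
    (hsum : ∑ i, a i = α * ∑ i, b i) :
    ∃ p : Equiv.Perm (Fin n), ∀ j j' : Fin n, j ≤ j' →
      |∑ i ∈ Finset.univ.filter (fun i : Fin n => j ≤ i ∧ i ≤ j'),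
        (a (p i) - α * b (p i))| ≤ 2 * c := by
  have hc : 0 < c := lt_of_lt_of_le hc' hcc
  set d : Fin n → ℚ := fun i => a i - α * b i with hd
  have hdb : ∀ i, |d i| ≤ c := by
    intro i
    have h1 := (hab i).1
    have h2 := (hab i).2
    have hbi := hb i
    have hai := ha i
    rw [abs_le]
    constructor
    · simp only [hd]; nlinarith
    · simp only [hd]; nlinarith
  have hdsum : ∑ i, d i = 0 := by
    simp only [hd, Finset.sum_sub_distrib, ← Finset.mul_sum, hsum, sub_self]
  obtain ⟨l', hperm, hpre⟩ := aux_list c n (List.ofFn d) (by simp)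
    (by intro x hx
        rw [List.mem_ofFn] at hx
        obtain ⟨i, rfl⟩ := hx
        exact hdb i)
    0 (by simpa using hc.le) (by simpa [List.sum_ofFn] using hdsum)
  -- realize l' as ofFn of a reindexed d
  have hlen : l'.length = n := by
    have := hperm.length_eq; simpa using this
  obtain ⟨σ, hσ⟩ := exists_perm_of_ofFn_perm n (fun i : Fin n => l'.get (Fin.cast hlen.symm i)) d
    (by
      have : List.ofFn (fun i : Fin n => l'.get (Fin.cast hlen.symm i)) = l' := by
        apply List.ext_get (by simp [hlen])
        intro i h1 h2
        simp
      rw [this]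
      exact hperm)
  have key : ∀ k : ℕ, |∑ i ∈ Finset.univ.filter (fun i : Fin n => i.val < k), d (σ i)| ≤ c := by
    intro k
    have h1 := hpre k
    have h2 : l' = List.ofFn (d ∘ σ) := by
      rw [← hσ]
      apply List.ext_get (by simp [hlen])
      intro i hh1 hh2
      simp
    rw [h2, zero_add, List.sum_take_ofFn] at h1
    simpa using h1
  refine ⟨σ, fun j j' hjj' => ?_⟩
  have hA := key (j'.val + 1)
  have hB := key j.val
  have hsplit : (Finset.univ.filter (fun i : Fin n => i.val < j'.val + 1)) =
      (Finset.univ.filter (fun i : Fin n => i.val < j.val)) ∪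
      (Finset.univ.filter (fun i : Fin n => j ≤ i ∧ i ≤ j')) := by
    ext i
    simp only [Finset.mem_filter, Finset.mem_union, Finset.mem_univ, true_and, Fin.le_def]
    have hj : j.val ≤ j'.val := hjj'
    omega
  have hdisj : Disjoint (Finset.univ.filter (fun i : Fin n => i.val < j.val))
      (Finset.univ.filter (fun i : Fin n => j ≤ i ∧ i ≤ j')) := by
    rw [Finset.disjoint_filter]
    intro i _ hi hji
    have := hji.1
    rw [Fin.le_def] at this
    omega
  have heq : ∑ i ∈ Finset.univ.filter (fun i : Fin n => i.val < j'.val + 1), d (σ i) =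
      (∑ i ∈ Finset.univ.filter (fun i : Fin n => i.val < j.val), d (σ i)) +
      ∑ i ∈ Finset.univ.filter (fun i : Fin n => j ≤ i ∧ i ≤ j'), d (σ i) := by
    rw [hsplit, Finset.sum_union hdisj]
  have hM : ∑ i ∈ Finset.univ.filter (fun i : Fin n => j ≤ i ∧ i ≤ j'), d (σ i) =
      (∑ i ∈ Finset.univ.filter (fun i : Fin n => i.val < j'.val + 1), d (σ i)) -
      ∑ i ∈ Finset.univ.filter (fun i : Fin n => i.val < j.val), d (σ i) := by
    linarith
  calc |∑ i ∈ Finset.univ.filter (fun i : Fin n => j ≤ i ∧ i ≤ j'), (a (σ i) - α * b (σ i))|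
      = |∑ i ∈ Finset.univ.filter (fun i : Fin n => j ≤ i ∧ i ≤ j'), d (σ i)| := rfl
    _ ≤ _ := by
        rw [hM]
        calc |_ - _| ≤ |∑ i ∈ Finset.univ.filter (fun i : Fin n => i.val < j'.val + 1), d (σ i)| +
              |∑ i ∈ Finset.univ.filter (fun i : Fin n => i.val < j.val), d (σ i)| := abs_sub _ _
          _ ≤ c + c := add_le_add hA hB
          _ = 2 * c := by ring
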